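/- Let F₁,…,F_d be n×n matrices with F₁ = √p·I, p ∈ [0,1], and Tr(F_j) = 0 for j ≥ 2. Then min over v with ‖v‖ ≤ 1 of max_i arccos[Re(λ_i(Σ_j v_j F_j))] equals arccos(√p), achieved at v = (1,0,…,0). -/

import Mathlib

open Polynomial Matrix

lemma arccos_antitone : Antitone Real.arccos := fun x y h =>
  sub_le_sub_left (Real.monotone_arcsin h) _

lemma charpoly_smul_one {n : ℕ} (c : ℂ) :
    (c • (1 : Matrix (Fin n) (Fin n) ℂ)).charpoly = (X - C c) ^ n := by
  have h : charmatrix (c • (1 : Matrix (Fin n) (Fin n) ℂ))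
      = (X - C c) • (1 : Matrix (Fin n) (Fin n) ℂ[X]) := by
    ext i j
    by_cases hij : i = j
    · subst hij
      simp [charmatrix_apply_eq, Matrix.one_apply]
    · simp [charmatrix_apply_ne _ _ _ hij, Matrix.one_apply, hij]
  rw [Matrix.charpoly, h, Matrix.det_smul, Matrix.det_one, mul_one, Fintype.card_fin]

theorem stmt13 {n d : ℕ} [NeZero n] [NeZero d] (p : ℝ) (hp0 : 0 ≤ p) (hp1 : p ≤ 1)
    (F : Fin d → Matrix (Fin n) (Fin n) ℂ)
    (hF0 : F 0 = ((Real.sqrt p : ℝ) : ℂ) • 1)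
    (hFj : ∀ j, j ≠ 0 → (F j).trace = 0) :
    (∀ v : Fin d → ℂ, ∑ j, ‖v j‖ ^ 2 ≤ 1 →
        ∃ μ ∈ (∑ j, v j • F j).charpoly.roots,
          Real.arccos (Real.sqrt p) ≤ Real.arccos μ.re) ∧
      ∀ μ ∈ (∑ j, (if j = 0 then (1 : ℂ) else 0) • F j).charpoly.roots,
        Real.arccos μ.re = Real.arccos (Real.sqrt p) := by
  have hn : 0 < n := Nat.pos_of_ne_zero (NeZero.ne n)
  constructor
  · intro v hv
    set M : Matrix (Fin n) (Fin n) ℂ := ∑ j, v j • F j with hM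
    -- trace of M
    have htr : M.trace = v 0 * ((Real.sqrt p * n : ℝ) : ℂ) := by
      rw [hM, Matrix.trace_sum]
      have : ∀ j : Fin d, (v j • F j).trace = v j * (F j).trace := by
        intro j; rw [Matrix.trace_smul]; rfl
      simp_rw [this]
      rw [Finset.sum_eq_single 0]
      · rw [hF0, Matrix.trace_smul, Matrix.trace_one, Fintype.card_fin]
        push_cast [smul_eq_mul]
        ring
      · intro j _ hj
        rw [hFj j hj, mul_zero]
      · intro h; exact absurd (Finset.mem_univ 0) h
    -- |v 0| ≤ 1
    have hv0 : ‖v 0‖ ≤ 1 := by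
      have h1 : ‖v 0‖ ^ 2 ≤ 1 := by
        refine le_trans ?_ hv
        exact Finset.single_le_sum (f := fun j => ‖v j‖ ^ 2)
          (fun j _ => by positivity) (Finset.mem_univ 0)
      nlinarith [norm_nonneg (v 0)]
    have hre0 : (v 0).re ≤ 1 := le_trans (Complex.re_le_norm _) hv0
    -- roots
    set S := M.charpoly.roots with hS
    have hcard : Multiset.card S = n := by
      have h := (Polynomial.splits_iff_card_roots).mp
        (IsAlgClosed.splits (M.charpoly))
      rw [hS, h, Matrix.charpoly_natDegree_eq_dim, Fintype.card_fin]
    have hSne : S ≠ 0 := by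
      intro h
      rw [h] at hcard
      simp at hcard
      omega
    have hsum : (S.map Complex.re).sum = Real.sqrt p * n * (v 0).re := by
      have : S.sum = M.trace := (Matrix.trace_eq_sum_roots_charpoly M).symm
      have hmap : (S.map Complex.re).sum = (S.sum).re :=
        (map_multiset_sum Complex.reAddGroupHom S).symm
      rw [hmap, this, htr]
      simp [Complex.mul_re]
      ring
    -- exists root with re ≤ √p
    have hkey : ∃ μ ∈ S, μ.re ≤ Real.sqrt p := by
      by_contra h
      push_neg at h
      have hlt : (S.map fun _ => Real.sqrt p).sum < (S.map Complex.re).sum :=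
        Multiset.sum_lt_sum_of_nonempty hSne h
      have hconst : (S.map fun _ => Real.sqrt p).sum = Real.sqrt p * n := by
        rw [Multiset.map_const', Multiset.sum_replicate, hcard, nsmul_eq_mul]
        ring
      have hub : (S.map Complex.re).sum ≤ Real.sqrt p * n := by
        rw [hsum]
        have hsp : 0 ≤ Real.sqrt p * n := by positivity
        nlinarith
      linarith [hconst ▸ hlt]
    obtain ⟨μ, hμ, hμle⟩ := hkey
    exact ⟨μ, hμ, arccos_antitone hμle⟩
  · -- second part
    have hsum : (∑ j, (if j = 0 then (1 : ℂ) else 0) • F j) = F 0 := by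
      rw [Finset.sum_eq_single 0]
      · simp
      · intro j _ hj; simp [hj]
      · intro h; exact absurd (Finset.mem_univ 0) h
    intro μ hμ
    rw [hsum, hF0, charpoly_smul_one] at hμ
    have : μ = ((Real.sqrt p : ℝ) : ℂ) := by
      have h1 := Polynomial.isRoot_of_mem_roots hμ
      simp only [Polynomial.IsRoot, Polynomial.eval_pow, Polynomial.eval_sub,
        Polynomial.eval_X, Polynomial.eval_C] at h1
      have h2 := pow_eq_zero_iff (NeZero.ne n) |>.mp h1
      exact sub_eq_zero.mp h2
    rw [this]
    simp
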